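/- (Lemma 4, Rayleigh case.) Let h̄ > 0, δ ∈ (0,1), and let f_R be the exponential density with mean h̄, i.e. f_R(x) = (1/h̄) e^{−x/h̄} on (0,∞). Then for every z > 0 with h̄ z < 1 (so that the Gauss hypergeometric series below converges), ∫₀^∞ ( (z x)^δ γ(1−δ, z x) − (1 − e^{−z x}) ) f_R(x) dx = (h̄ δ z/(1−δ)) · ₂F₁(1, 1−δ; 2−δ; −h̄ z). -/

import Mathlib

open Real MeasureTheory Set Filter

/-- Pochhammer symbol `(a)_n = Γ(a+n)/Γ(a)`. -/
noncomputable def poch (a : ℝ) : ℕ → ℝ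
  | 0 => 1
  | n + 1 => poch a n * (a + n)

/-- Gauss hypergeometric function `₂F₁(a, b; c; x) = Σ ((a)_n (b)_n/(c)_n) xⁿ/n!`. -/
noncomputable def hyp2F1 (a b c x : ℝ) : ℝ :=
  ∑' n : ℕ, (poch a n * poch b n / poch c n) * x ^ n / n.factorial

/-- Lower incomplete gamma function `γ(s, x) = ∫₀ˣ t^(s-1) e^(-t) dt`. -/
noncomputable def lowerGamma (s x : ℝ) : ℝ :=
  ∫ t in Set.Ioc (0 : ℝ) x, t ^ (s - 1) * Real.exp (-t)

lemma poch_one (n : ℕ) : poch 1 n = n.factorial := by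
  induction n with
  | zero => simp [poch]
  | succ n ih => simp [poch, ih, Nat.factorial_succ]; push_cast; ring

lemma poch_pos {a : ℝ} (ha : 0 < a) (n : ℕ) : 0 < poch a n := by
  induction n with
  | zero => simp [poch]
  | succ n ih => exact mul_pos ih (by positivity)

lemma poch_succ (a : ℝ) (n : ℕ) : a * poch (a + 1) n = poch a n * (a + n) := by
  induction n with
  | zero => simp [poch]
  | succ n ih =>
    have : poch (a+1) (n+1) = poch (a+1) n * (a + 1 + n) := rfl
    rw [this, ← mul_assoc, ih]
    show _ = poch a n * (a + n) * _
    push_cast; ring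

lemma hyp2F1_special {b x : ℝ} (hb : 0 < b) :
    hyp2F1 1 b (b + 1) x = ∑' n : ℕ, b / (b + n) * x ^ n := by
  unfold hyp2F1
  refine tsum_congr fun n => ?_
  have h1 : poch 1 n = n.factorial := poch_one n
  have h2 : b * poch (b + 1) n = poch b n * (b + n) := poch_succ b n
  have hp : (0:ℝ) < poch b n := poch_pos hb n
  have hbn : (0:ℝ) < b + n := by positivity
  have hf : (0:ℝ) < (n.factorial : ℝ) := by positivity
  rw [h1]
  have : poch (b+1) n = poch b n * (b + n) / b := by field_simp [← h2]; exact h2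
  rw [this]
  field_simp

lemma exp_series (x : ℝ) : Real.exp x = ∑' n : ℕ, x ^ n / n.factorial := by
  rw [Real.exp_eq_exp_ℝ, NormedSpace.exp_eq_tsum_div]

lemma one_sub_exp_neg (y : ℝ) :
    1 - Real.exp (-y) = ∑' n : ℕ, (-1 : ℝ) ^ n * y ^ (n+1) / (n+1).factorial := by
  have hs : Summable (fun n : ℕ => (-y) ^ n / n.factorial) := Real.summable_pow_div_factorial _
  have h0 := exp_series (-y)
  rw [Summable.tsum_eq_zero_add hs] at h0
  simp only [pow_zero, Nat.factorial_zero] at h0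
  have : Real.exp (-y) - 1 = ∑' n : ℕ, (-y) ^ (n+1) / (n+1).factorial := by
    rw [h0]; push_cast; ring
  have h2 : 1 - Real.exp (-y) = ∑' n : ℕ, -((-y) ^ (n+1) / (n+1).factorial) := by
    rw [tsum_neg, ← this]; ring
  rw [h2]
  refine tsum_congr fun n => ?_
  rw [neg_pow, pow_succ]
  ring

-- series for the lower incomplete gamma, δ ∈ (0,1), y > 0
lemma lowerGamma_series {δ y : ℝ} (hδ0 : 0 < δ) (hδ1 : δ < 1) (hy : 0 < y) :
    lowerGamma (1 - δ) y
      = ∑' n : ℕ, (-1 : ℝ) ^ n * y ^ ((n : ℝ) + 1 - δ) / (n.factorial * ((n : ℝ) + 1 - δ)) := by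
  have key : ∀ n : ℕ, (0:ℝ) < (n : ℝ) + 1 - δ := fun n => by
    have : (0:ℝ) ≤ (n:ℝ) := Nat.cast_nonneg n; linarith
  -- integrability of each term
  have hint : ∀ n : ℕ, IntegrableOn (fun t : ℝ => (-1 : ℝ) ^ n / n.factorial * t ^ ((n : ℝ) - δ))
      (Ioc (0:ℝ) y) := by
    intro n
    have h1 : IntervalIntegrable (fun t : ℝ => t ^ ((n : ℝ) - δ)) volume 0 y :=
      intervalIntegral.intervalIntegrable_rpow' (by have := key n; push_cast; linarith)
    have h2 := (intervalIntegrable_iff_integrableOn_Ioc_of_le hy.le).mp h1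
    exact h2.const_mul _
  -- value of the integral of each term
  have hval : ∀ n : ℕ, (∫ t in Ioc (0:ℝ) y, t ^ ((n : ℝ) - δ))
      = y ^ ((n : ℝ) + 1 - δ) / ((n : ℝ) + 1 - δ) := by
    intro n
    rw [← intervalIntegral.integral_of_le hy.le]
    rw [integral_rpow (Or.inl (by have := key n; push_cast; linarith))]
    rw [Real.zero_rpow (by have := key n; push_cast; linarith)]
    norm_num
    ring_nf
  -- pointwise series identity on Ioc
  have hpt : ∀ t ∈ Ioc (0:ℝ) y,
      t ^ ((1 - δ) - 1) * Real.exp (-t)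
        = ∑' n : ℕ, (-1 : ℝ) ^ n / n.factorial * t ^ ((n : ℝ) - δ) := by
    intro t ht
    have ht0 : 0 < t := ht.1
    rw [exp_series (-t), ← tsum_mul_left]
    refine tsum_congr fun n => ?_
    have h3 : t ^ ((n : ℝ) - δ) = t ^ (n : ℕ) * t ^ (-δ) := by
      rw [← Real.rpow_natCast t n, ← Real.rpow_add ht0]; ring_nf
    have h2 : t ^ ((1-δ) - 1) = t ^ (-δ) := by norm_num
    rw [h3, h2, neg_pow]
    ring
  -- norm of each integral
  have hnorm : ∀ n : ℕ,
      (∫ t in Ioc (0:ℝ) y, ‖(-1 : ℝ) ^ n / n.factorial * t ^ ((n : ℝ) - δ)‖)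
        = (y ^ ((n : ℝ) + 1 - δ) / ((n : ℝ) + 1 - δ)) / n.factorial := by
    intro n
    have : ∀ t ∈ Ioc (0:ℝ) y,
        ‖(-1 : ℝ) ^ n / n.factorial * t ^ ((n : ℝ) - δ)‖
          = (1 / n.factorial : ℝ) * t ^ ((n : ℝ) - δ) := by
      intro t ht
      rw [norm_mul, norm_div, norm_pow]
      simp [abs_of_nonneg (Real.rpow_nonneg ht.1.le _), Nat.abs_cast]
    rw [setIntegral_congr_fun measurableSet_Ioc this, integral_const_mul, hval n]
    ring
  have hsum : Summable (fun n : ℕ =>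
      ∫ t in Ioc (0:ℝ) y, ‖(-1 : ℝ) ^ n / n.factorial * t ^ ((n : ℝ) - δ)‖) := by
    have hb : Summable (fun n : ℕ => (y ^ (1 - δ) / (1 - δ)) * (y ^ n / n.factorial)) :=
      (Real.summable_pow_div_factorial y).mul_left _
    refine Summable.of_nonneg_of_le (fun n => ?_) (fun n => ?_) hb
    · rw [hnorm n]
      exact div_nonneg (div_nonneg (Real.rpow_nonneg hy.le _) (key n).le) (Nat.cast_nonneg _)
    · rw [hnorm n]
      have hk := key n
      have hsplit : y ^ ((n : ℝ) + 1 - δ) = y ^ (1 - δ) * y ^ n := by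
        rw [← Real.rpow_natCast y n, ← Real.rpow_add hy]; ring_nf
      rw [hsplit]
      have h1δ : (0:ℝ) < 1 - δ := by linarith
      have hle : (1 - δ) ≤ (n : ℝ) + 1 - δ := by
        have : (0:ℝ) ≤ (n:ℝ) := Nat.cast_nonneg n; linarith
      have hden : y ^ (1 - δ) * y ^ n / ((n : ℝ) + 1 - δ) / n.factorial
          ≤ y ^ (1 - δ) * y ^ n / (1 - δ) / n.factorial := by
        have := div_le_div_of_nonneg_left (c := (1 - δ)) (b := (n : ℝ) + 1 - δ)
          (a := y ^ (1 - δ) * y ^ n) (by positivity) h1δ hle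
        gcongr
      calc y ^ (1 - δ) * y ^ n / ((n : ℝ) + 1 - δ) / n.factorial
          ≤ y ^ (1 - δ) * y ^ n / (1 - δ) / n.factorial := hden
        _ = y ^ (1 - δ) / (1 - δ) * (y ^ n / n.factorial) := by ring
  -- swap integral and sum
  unfold lowerGamma
  rw [setIntegral_congr_fun measurableSet_Ioc hpt,
    ← integral_tsum_of_summable_integral_norm hint hsum]
  refine tsum_congr fun n => ?_
  rw [integral_const_mul, hval n]
  field_simp


lemma base_integral {h : ℝ} (hh : 0 < h) (n : ℕ) :
    ∫ x in Ioi (0:ℝ), x ^ (n+1 : ℕ) * Real.exp (-x / h)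
      = h ^ (n+2 : ℕ) * (n+1).factorial := by
  have h1 := Real.integral_rpow_mul_exp_neg_mul_Ioi (a := (n:ℝ)+2) (r := 1/h)
    (by positivity) (by positivity)
  have h2 : ∀ x : ℝ, x ^ ((n:ℝ)+2-1) * Real.exp (-(1/h * x))
      = x ^ (n+1 : ℕ) * Real.exp (-x / h) := by
    intro x
    rw [show ((n:ℝ)+2-1) = ((n+1 : ℕ) : ℝ) by push_cast; ring, Real.rpow_natCast,
      show -(1/h * x) = -x / h by ring]
  simp only [h2] at h1
  have h4 : (1/(1/h)) ^ ((n:ℝ)+2) = h ^ (n+2:ℕ) := by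
    rw [one_div_one_div, show ((n:ℝ)+2) = ((n+2:ℕ):ℝ) by push_cast; ring, Real.rpow_natCast]
  have h5 : Real.Gamma ((n:ℝ)+2) = (n+1).factorial := by
    rw [show ((n:ℝ)+2) = ((n+1:ℕ):ℝ)+1 by push_cast; ring, Real.Gamma_nat_eq_factorial]
  rw [h1, h4, h5]

lemma base_integrable {h : ℝ} (hh : 0 < h) (n : ℕ) :
    IntegrableOn (fun x : ℝ => x ^ (n+1:ℕ) * Real.exp (-x / h)) (Ioi 0) := by
  have h1 := integrableOn_rpow_mul_exp_neg_mul_rpow (s := ((n:ℝ)+1)) (p := 1) (b := 1/h)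
    (by have : (0:ℝ) ≤ n := Nat.cast_nonneg n; linarith) zero_lt_one (by positivity)
  refine h1.congr_fun (fun x hx => ?_) measurableSet_Ioi
  beta_reduce
  rw [show ((n:ℝ)+1) = ((n+1 : ℕ) : ℝ) by push_cast; ring, Real.rpow_natCast, Real.rpow_one,
    show -(1/h) * x = -x / h by ring]

lemma integrand_series {δ y : ℝ} (hδ0 : 0 < δ) (hδ1 : δ < 1) (hy : 0 < y) :
    y ^ δ * lowerGamma (1 - δ) y - (1 - Real.exp (-y))
      = ∑' n : ℕ, δ * (-1 : ℝ) ^ n * y ^ (n+1)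
          / (n.factorial * ((n:ℝ)+1) * ((n:ℝ) + 1 - δ)) := by
  have key : ∀ n : ℕ, (0:ℝ) < (n : ℝ) + 1 - δ := fun n => by
    have : (0:ℝ) ≤ (n:ℝ) := Nat.cast_nonneg n; linarith
  set A : ℕ → ℝ := fun n => (-1 : ℝ) ^ n * y ^ (n+1) / (n.factorial * ((n : ℝ) + 1 - δ)) with hA
  set B : ℕ → ℝ := fun n => (-1 : ℝ) ^ n * y ^ (n+1) / (n+1).factorial with hB
  have hAsum : Summable A := by
    refine Summable.of_norm ?_
    refine Summable.of_nonneg_of_le (fun n => norm_nonneg _) (fun n => ?_)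
      ((Real.summable_pow_div_factorial y).mul_left (y / (1 - δ)))
    have hk := key n
    have h1δ : (0:ℝ) < 1 - δ := by linarith
    have : ‖A n‖ = y ^ (n+1) / (n.factorial * ((n : ℝ) + 1 - δ)) := by
      rw [hA]
      simp only [norm_div, norm_mul, norm_pow, norm_neg, norm_one, one_pow, one_mul,
        Real.norm_eq_abs, Nat.abs_cast, abs_of_nonneg hy.le, abs_of_nonneg hk.le]
    rw [this]
    have hfac : (0:ℝ) < (n.factorial:ℝ) := by exact_mod_cast Nat.factorial_pos n
    have h2 : y ^ (n+1) / ((n.factorial:ℝ) * ((n:ℝ)+1-δ))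
        ≤ y ^ (n+1) / ((n.factorial:ℝ) * (1-δ)) :=
      div_le_div_of_nonneg_left (by positivity) (by positivity)
        (by nlinarith [Nat.cast_nonneg (α := ℝ) n])
    calc y ^ (n+1) / ((n.factorial:ℝ) * ((n:ℝ)+1-δ))
        ≤ y ^ (n+1) / ((n.factorial:ℝ) * (1-δ)) := h2
      _ = y / (1-δ) * (y ^ n / n.factorial) := by
          rw [pow_succ]; field_simp
  have hBsum : Summable B := by
    refine Summable.of_norm ?_
    refine Summable.of_nonneg_of_le (fun n => norm_nonneg _) (fun n => ?_)
      ((Real.summable_pow_div_factorial y).mul_left y)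
    have hfs : (0:ℝ) < ((n+1).factorial:ℝ) := by exact_mod_cast Nat.factorial_pos (n+1)
    have hfac : (0:ℝ) < (n.factorial:ℝ) := by exact_mod_cast Nat.factorial_pos n
    have : ‖B n‖ = y ^ (n+1) / ((n+1).factorial:ℝ) := by
      rw [hB]
      simp only [norm_div, norm_mul, norm_pow, norm_neg, norm_one, one_pow, one_mul,
        Real.norm_eq_abs, Nat.abs_cast, abs_of_nonneg hy.le]
    rw [this]
    have hle : (n.factorial:ℝ) ≤ ((n+1).factorial:ℝ) := by
      exact_mod_cast Nat.factorial_le (Nat.le_succ n)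
    calc y ^ (n+1) / ((n+1).factorial:ℝ)
        ≤ y ^ (n+1) / (n.factorial:ℝ) := by
          exact div_le_div_of_nonneg_left (by positivity) hfac hle
      _ = y * (y ^ n / n.factorial) := by rw [pow_succ]; field_simp
  have hA' : y ^ δ * lowerGamma (1 - δ) y = ∑' n, A n := by
    rw [lowerGamma_series hδ0 hδ1 hy, ← tsum_mul_left]
    refine tsum_congr fun n => ?_
    have hyp : y ^ δ * y ^ ((n:ℝ)+1-δ) = y ^ (n+1 : ℕ) := by
      rw [← Real.rpow_natCast y (n+1), ← Real.rpow_add hy]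
      push_cast; ring_nf
    have h1 : y ^ δ * ((-1:ℝ)^n * y ^ ((n:ℝ)+1-δ) / (n.factorial * ((n:ℝ)+1-δ)))
        = (-1:ℝ)^n * (y ^ δ * y ^ ((n:ℝ)+1-δ)) / (n.factorial * ((n:ℝ)+1-δ)) := by
      ring
    rw [h1, hyp, hA]
  have hB' : 1 - Real.exp (-y) = ∑' n, B n := one_sub_exp_neg y
  rw [hA', hB', ← (hAsum.hasSum.sub hBsum.hasSum).tsum_eq]
  refine tsum_congr fun n => ?_
  have hfac : (0:ℝ) < (n.factorial:ℝ) := by exact_mod_cast Nat.factorial_pos n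
  have hk := key n
  have hfs : ((n+1).factorial : ℝ) = ((n:ℝ)+1) * n.factorial := by
    rw [Nat.factorial_succ]; push_cast; ring
  rw [hA, hB]
  simp only []
  rw [hfs]
  field_simp
  ring

/-- Lemma 4 (Rayleigh case): with `f_R` the exponential density of mean `h̄`,
`∫₀^∞ ((zx)^δ γ(1−δ, zx) − (1 − e^(−zx))) f_R(x) dx
  = (h̄δz/(1−δ)) ₂F₁(1, 1−δ; 2−δ; −h̄z)`. -/
theorem rayleigh_W (hbar : ℝ) (hhbar : 0 < hbar)
    (δ : ℝ) (hδ0 : 0 < δ) (hδ1 : δ < 1)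
    (z : ℝ) (hz : 0 < z) (hconv : hbar * z < 1) :
    (∫ x in Set.Ioi (0 : ℝ),
        ((z * x) ^ δ * lowerGamma (1 - δ) (z * x) - (1 - Real.exp (-(z * x)))) *
          (1 / hbar * Real.exp (-x / hbar)))
      = hbar * δ * z / (1 - δ) * hyp2F1 1 (1 - δ) (2 - δ) (-(hbar * z)) := by
  have h1δ : (0:ℝ) < 1 - δ := by linarith
  have ha0 : 0 < hbar * z := mul_pos hhbar hz
  have key : ∀ n : ℕ, (0:ℝ) < (n : ℝ) + 1 - δ := fun n => by
    have : (0:ℝ) ≤ (n:ℝ) := Nat.cast_nonneg n; linarith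
  set c : ℕ → ℝ := fun n => δ * (-1 : ℝ) ^ n * z ^ (n+1)
      / (n.factorial * ((n:ℝ)+1) * ((n:ℝ) + 1 - δ) * hbar) with hc
  set F : ℕ → ℝ → ℝ := fun n x => c n * (x ^ (n+1 : ℕ) * Real.exp (-x / hbar)) with hF
  -- rewrite the integrand as a series
  have hpt : ∀ x ∈ Ioi (0:ℝ),
      ((z * x) ^ δ * lowerGamma (1 - δ) (z * x) - (1 - Real.exp (-(z * x)))) *
          (1 / hbar * Real.exp (-x / hbar)) = ∑' n : ℕ, F n x := by
    intro x hx
    have hzx : 0 < z * x := mul_pos hz hx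
    rw [integrand_series hδ0 hδ1 hzx, ← tsum_mul_right]
    refine tsum_congr fun n => ?_
    rw [hF, hc]
    simp only []
    rw [mul_pow z x (n+1)]
    field_simp
  rw [setIntegral_congr_fun measurableSet_Ioi hpt]
  -- integrability of each term
  have hFint : ∀ n : ℕ, IntegrableOn (F n) (Ioi (0:ℝ)) := fun n =>
    (base_integrable hhbar n).const_mul _
  -- value of each integral
  have hval : ∀ n : ℕ, (∫ x in Ioi (0:ℝ), F n x)
      = δ * (-1 : ℝ) ^ n * (hbar * z) ^ (n+1) / ((n:ℝ) + 1 - δ) := by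
    intro n
    rw [hF]
    simp only []
    rw [integral_const_mul, base_integral hhbar n, hc]
    have hfs : ((n+1).factorial : ℝ) = ((n:ℝ)+1) * n.factorial := by
      rw [Nat.factorial_succ]; push_cast; ring
    have hfac : (0:ℝ) < (n.factorial:ℝ) := by exact_mod_cast Nat.factorial_pos n
    have hk := key n
    rw [hfs, mul_pow hbar z (n+1), pow_succ hbar (n+1)]
    field_simp
  -- norms of integrals
  have hnorm : ∀ n : ℕ, (∫ x in Ioi (0:ℝ), ‖F n x‖)
      = |c n| * (hbar ^ (n+2:ℕ) * (n+1).factorial) := by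
    intro n
    have : ∀ x ∈ Ioi (0:ℝ), ‖F n x‖ = |c n| * (x ^ (n+1:ℕ) * Real.exp (-x / hbar)) := by
      intro x hx
      rw [hF]
      simp only []
      rw [norm_mul, Real.norm_eq_abs, Real.norm_eq_abs,
        abs_of_nonneg (mul_nonneg (pow_nonneg (le_of_lt hx) _) (Real.exp_nonneg _))]
    rw [setIntegral_congr_fun measurableSet_Ioi this, integral_const_mul,
      base_integral hhbar n]
  have hFsum : Summable (fun n : ℕ => ∫ x in Ioi (0:ℝ), ‖F n x‖) := by
    have hgeo : Summable (fun n : ℕ => (δ / (1 - δ) * (hbar * z)) * (hbar * z) ^ n) :=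
      (summable_geometric_of_lt_one ha0.le hconv).mul_left _
    refine Summable.of_nonneg_of_le
      (fun n => integral_nonneg fun x => norm_nonneg _) (fun n => ?_) hgeo
    rw [hnorm n]
    have hfs : ((n+1).factorial : ℝ) = ((n:ℝ)+1) * n.factorial := by
      rw [Nat.factorial_succ]; push_cast; ring
    have hfac : (0:ℝ) < (n.factorial:ℝ) := by exact_mod_cast Nat.factorial_pos n
    have hk := key n
    have hcabs : |c n| = δ * z ^ (n+1)
        / (n.factorial * ((n:ℝ)+1) * ((n:ℝ) + 1 - δ) * hbar) := by
      rw [hc]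
      simp only []
      rw [abs_div, abs_mul, abs_mul, abs_pow, abs_neg, abs_one, one_pow, mul_one,
        abs_of_nonneg hδ0.le, abs_of_nonneg (pow_nonneg hz.le _),
        abs_of_nonneg (le_of_lt (mul_pos (mul_pos (mul_pos hfac
          (by positivity : (0:ℝ) < (n:ℝ)+1)) hk) hhbar))]
    rw [hcabs, hfs, pow_succ hbar (n+1)]
    have heq : δ * z ^ (n+1) / (↑n.factorial * ((n:ℝ)+1) * ((n:ℝ)+1-δ) * hbar)
          * (hbar ^ (n+1) * hbar * ((((n:ℝ)+1) * n.factorial)))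
        = δ / ((n:ℝ)+1-δ) * (hbar ^ (n+1) * z ^ (n+1)) := by
      field_simp
    rw [heq]
    have hle : δ / ((n:ℝ)+1-δ) ≤ δ / (1-δ) :=
      div_le_div_of_nonneg_left hδ0.le h1δ (by have : (0:ℝ) ≤ (n:ℝ) := Nat.cast_nonneg n; linarith)
    have hpos : (0:ℝ) ≤ hbar ^ (n+1) * z ^ (n+1) := by positivity
    calc δ / ((n:ℝ)+1-δ) * (hbar ^ (n+1) * z ^ (n+1))
        ≤ δ / (1-δ) * (hbar ^ (n+1) * z ^ (n+1)) := mul_le_mul_of_nonneg_right hle hpos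
      _ = δ / (1 - δ) * (hbar * z) * (hbar * z) ^ n := by
          ring
  rw [← integral_tsum_of_summable_integral_norm hFint hFsum]
  -- now compute the RHS
  have h2δ : (2 - δ) = (1 - δ) + 1 := by ring
  rw [h2δ, hyp2F1_special h1δ, ← tsum_mul_left]
  refine tsum_congr fun n => ?_
  rw [hval n]
  have hk := key n
  have hne : (1 - δ) + (n:ℝ) ≠ 0 := by
    have : (0:ℝ) ≤ (n:ℝ) := Nat.cast_nonneg n; linarith
  rw [neg_pow (hbar * z) n]
  have hsplit : (hbar * z) ^ (n+1) = (hbar * z) ^ n * (hbar * z) := pow_succ _ _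
  rw [hsplit]
  field_simp
  ring
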